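/- arXiv:2301.08723 — 3 statements merged into one kernel-verified Lean document; each statement's English description precedes it below -/
import Mathlib

section
/- For all real numbers M ≥ 0, s ≥ 0, t ≥ 0, it holds that st/(M + log(e + st)) ≤ e^{t-M} + s. -/
theorem product_log_inequality (M s t : ℝ) (hM : 0 ≤ M) (hs : 0 ≤ s) (ht : 0 ≤ t) :
    s * t / (M + Real.log (Real.exp 1 + s * t)) ≤ Real.exp (t - M) + s := by
  have hst : 0 ≤ s * t := mul_nonneg hs ht
  have he : Real.exp 1 ≤ Real.exp 1 + s * t := by linarith
  have hpos : 0 < Real.exp 1 + s * t := lt_of_lt_of_le (Real.exp_pos 1) he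
  have hlog : 1 ≤ Real.log (Real.exp 1 + s * t) := by
    calc (1:ℝ) = Real.log (Real.exp 1) := (Real.log_exp 1).symm
    _ ≤ _ := Real.log_le_log (Real.exp_pos 1) he
  have hDpos : 0 < M + Real.log (Real.exp 1 + s * t) := by linarith
  rcases le_or_gt t (M + Real.log (Real.exp 1 + s * t)) with h | h
  · have h1 : s * t / (M + Real.log (Real.exp 1 + s * t)) ≤ s := by
      rw [div_le_iff₀ hDpos]; nlinarith
    have := Real.exp_pos (t - M)
    linarith
  · have hlt : Real.log (Real.exp 1 + s * t) < t - M := by linarith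
    have h2 : Real.exp 1 + s * t < Real.exp (t - M) := (Real.log_lt_iff_lt_exp hpos).mp hlt
    have h3 : s * t / (M + Real.log (Real.exp 1 + s * t)) ≤ s * t :=
      div_le_self hst (by linarith)
    have := Real.exp_pos 1
    linarith
end

section
/- Let (Ω, F, P) be a probability space with regular filtration {F_k}, each F_k generated by countably many atoms. Let 0 < p < 1, α_p = 1/p − 1, g ∈ Λ_2(α_p), and let a be a simple (p,∞)-atom supported on A ∈ F_n with P(A)>0 (i.e., E_n(a)=0, supp(a) ⊆ A, ‖a‖_∞ ≤ P(A)^{−1/p}). Then ‖Π_2(a,g)‖_{H^1(Ω)} ≤ ‖g‖_{Λ_2(α_p)}, where Π_2(a,g) = Σ_k a_{k−1} d_k g. -/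
open MeasureTheory Filter Set
open scoped ENNReal NNReal

/-- The `k`-th martingale difference `d_k h = E(h | ℱ k) − E(h | ℱ (k−1))` (and `d_0 h = 0`). -/
noncomputable def mdiff {Ω : Type*} {m0 : MeasurableSpace Ω} (μ : Measure Ω)
    (ℱ : Filtration ℕ m0) (h : Ω → ℝ) (k : ℕ) : Ω → ℝ :=
  if k = 0 then 0 else fun ω => (μ[h | ℱ k]) ω - (μ[h | ℱ (k - 1)]) ω

/-- A filtration is regular. -/
def IsRegularFiltration {Ω : Type*} {m0 : MeasurableSpace Ω} (μ : Measure Ω)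
    (ℱ : Filtration ℕ m0) : Prop :=
  ∃ c : ℝ, 0 < c ∧ ∀ k : ℕ, 2 ≤ k → ∀ F : Set Ω, MeasurableSet[ℱ k] F →
    ∃ G : Set Ω, MeasurableSet[ℱ (k - 1)] G ∧ F ⊆ G ∧ μ G ≤ ENNReal.ofReal c * μ F

/-- Each `ℱ k` is generated by countably many atoms (a countable measurable partition). -/
def IsCountablyAtomic {Ω : Type*} {m0 : MeasurableSpace Ω} (ℱ : Filtration ℕ m0) : Prop :=
  ∀ k : ℕ, ∃ s : ℕ → Set Ω, Pairwise (fun i j => Disjoint (s i) (s j)) ∧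
    (⋃ i, s i) = Set.univ ∧ (ℱ k : MeasurableSpace Ω) = MeasurableSpace.generateFrom (Set.range s)

private lemma memLp_two_condexp' {Ω : Type*} {m0 : MeasurableSpace Ω} {μ : Measure Ω}
    [IsProbabilityMeasure μ] {m : MeasurableSpace Ω} (hm : m ≤ m0) {g : Ω → ℝ}
    (hg : MemLp g 2 μ) : MemLp (μ[g|m]) 2 μ := by
  have hint : Integrable g μ := hg.integrable one_le_two
  have h0 : (condExpL2 ℝ ℝ hm (hg.toLp g) : Ω →₂[μ] ℝ) =ᵐ[μ] (μ[g|m]) := by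
    refine ae_eq_condExp_of_forall_setIntegral_eq hm hint ?_ ?_ ?_
    · intro s hs hμs
      exact integrableOn_condExpL2_of_measure_ne_top hm hμs.ne _
    · intro s hs hμs
      rw [integral_condExpL2_eq hm (hg.toLp g) hs hμs.ne]
      exact integral_congr_ae (ae_restrict_of_ae hg.coeFn_toLp)
    · exact aestronglyMeasurable_condExpL2 hm _
  exact (Lp.memLp _).ae_eq h0

private lemma integrable_mul_L2 {Ω : Type*} {m0 : MeasurableSpace Ω} {μ : Measure Ω}
    {X h : Ω → ℝ} (hX : MemLp X 2 μ) (hh : MemLp h 2 μ) :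
    Integrable (fun ω => X ω * h ω) μ := by
  have : MemLp (X • h) 1 μ := by
    exact MemLp.smul hh hX
  exact memLp_one_iff_integrable.mp this

private lemma orth_condexp {Ω : Type*} {m0 : MeasurableSpace Ω} {μ : Measure Ω}
    [IsProbabilityMeasure μ] {m : MeasurableSpace Ω} (hm : m ≤ m0) {g X : Ω → ℝ}
    (hg : MemLp g 2 μ) (hX : MemLp X 2 μ) (hXm : StronglyMeasurable[m] X) :
    ∫ ω, X ω * (g ω - (μ[g|m]) ω) ∂μ = 0 := by
  have hgint : Integrable g μ := hg.integrable one_le_two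
  have hEg : MemLp (μ[g|m]) 2 μ := memLp_two_condexp' hm hg
  set h : Ω → ℝ := fun ω => g ω - (μ[g|m]) ω with hh_def
  have hh2 : MemLp h 2 μ := hg.sub hEg
  have hhint : Integrable h μ := hh2.integrable one_le_two
  have hXh : Integrable (X * h) μ := integrable_mul_L2 hX hh2
  have hcond : μ[X * h|m] =ᵐ[μ] X * μ[h|m] :=
    condExp_mul_of_stronglyMeasurable_left hXm hXh hhint
  have hzero : μ[h|m] =ᵐ[μ] 0 := by
    have h1 : μ[h|m] =ᵐ[μ] μ[g|m] - μ[μ[g|m]|m] := condExp_sub hgint integrable_condExp m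
    have h2 : μ[μ[g|m]|m] = μ[g|m] :=
      condExp_of_stronglyMeasurable hm stronglyMeasurable_condExp integrable_condExp
    filter_upwards [h1] with ω hω
    simp [hω, h2]
  calc ∫ ω, X ω * h ω ∂μ = ∫ ω, (X * h) ω ∂μ := rfl
    _ = ∫ ω, (μ[X * h|m]) ω ∂μ := (integral_condExp hm).symm
    _ = ∫ ω, X ω * (μ[h|m]) ω ∂μ := integral_congr_ae hcond
    _ = 0 := by
        rw [← integral_zero Ω ℝ (μ := μ)]
        refine integral_congr_ae ?_
        filter_upwards [hzero] with ω hω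
        simp [hω]

private lemma telescope_step {Ω : Type*} {m0 : MeasurableSpace Ω} {μ : Measure Ω}
    [IsProbabilityMeasure μ] (ℱ : Filtration ℕ m0) {g : Ω → ℝ} (hg : MemLp g 2 μ)
    {n : ℕ} {A : Set Ω} (hA : MeasurableSet[ℱ n] A) (j : ℕ) (hj : n ≤ j) :
    ∫ ω in A, (g ω - (μ[g|ℱ j]) ω) ^ 2 ∂μ =
      ∫ ω in A, (g ω - (μ[g|ℱ (j+1)]) ω) ^ 2 ∂μ +
        ∫ ω in A, ((μ[g|ℱ (j+1)]) ω - (μ[g|ℱ j]) ω) ^ 2 ∂μ := by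
  set u : Ω → ℝ := fun ω => g ω - (μ[g|ℱ (j+1)]) ω with hu_def
  set v : Ω → ℝ := fun ω => (μ[g|ℱ (j+1)]) ω - (μ[g|ℱ j]) ω with hv_def
  have hu2 : MemLp u 2 μ := hg.sub (memLp_two_condexp' (ℱ.le _) hg)
  have hv2 : MemLp v 2 μ :=
    (memLp_two_condexp' (ℱ.le _) hg).sub (memLp_two_condexp' (ℱ.le _) hg)
  have hA' : MeasurableSet A := ℱ.le n A hA
  have hAj : MeasurableSet[ℱ (j+1)] A := ℱ.mono (hj.trans (Nat.le_succ j)) A hA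
  have hvm : StronglyMeasurable[ℱ (j+1)] v :=
    stronglyMeasurable_condExp.sub (stronglyMeasurable_condExp.mono (ℱ.mono (Nat.le_succ j)))
  have key : ∫ ω in A, v ω * u ω ∂μ = 0 := by
    have h1 : ∫ ω in A, v ω * u ω ∂μ = ∫ ω, A.indicator v ω * u ω ∂μ := by
      rw [← integral_indicator hA']
      congr 1
      funext ω
      by_cases hω : ω ∈ A <;> simp [Set.indicator_apply, hω]
    rw [h1]
    exact orth_condexp (ℱ.le (j+1)) hg (hv2.indicator hA') (hvm.indicator hAj)
  have hpt : ∀ ω, (g ω - (μ[g|ℱ j]) ω) ^ 2 = u ω ^ 2 + v ω ^ 2 + 2 * (v ω * u ω) := by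
    intro ω; simp only [hu_def, hv_def]; ring
  calc ∫ ω in A, (g ω - (μ[g|ℱ j]) ω) ^ 2 ∂μ
      = ∫ ω in A, (u ω ^ 2 + v ω ^ 2 + 2 * (v ω * u ω)) ∂μ := by simp_rw [hpt]
    _ = (∫ ω in A, (u ω ^ 2 + v ω ^ 2) ∂μ) + ∫ ω in A, 2 * (v ω * u ω) ∂μ := by
        refine integral_add ?_ ?_
        · exact (hu2.integrable_sq.add hv2.integrable_sq).integrableOn
        · exact ((integrable_mul_L2 hv2 hu2).const_mul 2).integrableOn
    _ = (∫ ω in A, u ω ^ 2 ∂μ) + (∫ ω in A, v ω ^ 2 ∂μ) + 2 * ∫ ω in A, v ω * u ω ∂μ := by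
        rw [integral_add hu2.integrable_sq.integrableOn hv2.integrable_sq.integrableOn,
          integral_const_mul]
    _ = (∫ ω in A, u ω ^ 2 ∂μ) + (∫ ω in A, v ω ^ 2 ∂μ) := by rw [key]; ring

private lemma sum_le_lambda {Ω : Type*} {m0 : MeasurableSpace Ω} {μ : Measure Ω}
    [IsProbabilityMeasure μ] (ℱ : Filtration ℕ m0) {g : Ω → ℝ} (hg : MemLp g 2 μ)
    {n : ℕ} {A : Set Ω} (hA : MeasurableSet[ℱ n] A) (s : Finset ℕ) :
    (∑ k ∈ s, if n + 2 ≤ k then ∫ ω in A, (mdiff μ ℱ g k ω) ^ 2 ∂μ else 0) ≤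
      ∫ ω in A, (g ω - (μ[g|ℱ n]) ω) ^ 2 ∂μ := by
  set F : ℕ → ℝ := fun j => ∫ ω in A, (g ω - (μ[g|ℱ j]) ω) ^ 2 ∂μ with hF_def
  set Q : ℕ → ℝ := fun k => ∫ ω in A, (mdiff μ ℱ g k ω) ^ 2 ∂μ with hQ_def
  have hFnn : ∀ j, 0 ≤ F j := fun j => integral_nonneg fun ω => sq_nonneg _
  have hQnn : ∀ k, 0 ≤ Q k := fun k => integral_nonneg fun ω => sq_nonneg _
  have hQF : ∀ j, n ≤ j → F j = F (j + 1) + Q (j + 1) := by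
    intro j hj
    have hQ : Q (j + 1) = ∫ ω in A, ((μ[g|ℱ (j+1)]) ω - (μ[g|ℱ j]) ω) ^ 2 ∂μ := by
      simp [hQ_def, mdiff]
    rw [hQ, hF_def]
    exact telescope_step ℱ hg hA j hj
  have htel : ∀ m : ℕ, F (n + m) + ∑ k ∈ Finset.range m, Q (n + 1 + k) = F n := by
    intro m
    induction m with
    | zero => simp
    | succ m ih =>
      rw [Finset.sum_range_succ]
      have h1 : F (n + m) = F (n + m + 1) + Q (n + m + 1) := hQF (n + m) (Nat.le_add_right n m)
      have h2 : n + 1 + m = n + m + 1 := by omega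
      rw [h2]
      have h3 : n + (m + 1) = n + m + 1 := by omega
      rw [h3]
      linarith [ih]
  have hsum : ∀ m : ℕ, ∑ k ∈ Finset.range m, Q (n + 1 + k) ≤ F n := by
    intro m
    have := htel m
    linarith [hFnn (n + m)]
  set N := s.sup id + 1 with hN_def
  calc (∑ k ∈ s, if n + 2 ≤ k then Q k else 0)
      = ∑ k ∈ s.filter (fun k => n + 2 ≤ k), Q k := (Finset.sum_filter _ _).symm
    _ ≤ ∑ k ∈ Finset.Ico (n + 1) (n + 1 + N), Q k := by
        refine Finset.sum_le_sum_of_subset_of_nonneg ?_ fun k _ _ => hQnn k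
        intro k hk
        rw [Finset.mem_filter] at hk
        have hks : k ≤ s.sup id := Finset.le_sup (f := id) hk.1
        rw [Finset.mem_Ico]
        omega
    _ = ∑ k ∈ Finset.range N, Q (n + 1 + k) := by
        rw [Finset.sum_Ico_eq_sum_range]
        simp
    _ ≤ F n := hsum N

/-- For `0 < p < 1`, `α_p = 1/p − 1`, `g ∈ Λ₂(α_p)` with norm bound `K`, and `a` a simple
`(p,∞)`-atom supported on `A ∈ ℱ n` with `P(A) > 0`, the paraproduct
`Π₂(a,g) = Σ_k a_{k−1} d_k g` satisfies `‖Π₂(a,g)‖_{H¹} = ‖S(Π₂(a,g))‖₁ ≤ K`, where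
`S(Π₂(a,g)) = (Σ_k |a_{k−1} d_k g|²)^{1/2}`. -/
theorem paraproduct_Pi2_pAtom_bound {Ω : Type*} {m0 : MeasurableSpace Ω} (μ : Measure Ω)
    [IsProbabilityMeasure μ] (ℱ : Filtration ℕ m0)
    (hreg : IsRegularFiltration μ ℱ) (hatomic : IsCountablyAtomic ℱ)
    (p : ℝ) (hp0 : 0 < p) (hp1 : p < 1)
    (g a : Ω → ℝ) (hg : MemLp g 2 μ) (ha : MemLp a ∞ μ)
    (n : ℕ) (A : Set Ω) (hA : MeasurableSet[ℱ n] A) (hApos : 0 < μ A)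
    (hzero : μ[a | ℱ n] =ᵐ[μ] 0)
    (hsupp : ∀ ω, ω ∉ A → a ω = 0)
    (hsize : eLpNorm a ∞ μ ≤ μ A ^ (-(1 / p) : ℝ))
    (K : ℝ) (hK : 0 ≤ K)
    (hΛ2 : ∀ (m : ℕ) (B : Set Ω), MeasurableSet[ℱ m] B →
      ∫ ω in B, (g ω - (μ[g | ℱ m]) ω) ^ 2 ∂μ ≤
        K ^ 2 * (μ B).toReal ^ (1 + 2 * (1 / p - 1))) :
    eLpNorm (fun ω =>
        Real.sqrt (∑' k : ℕ, ((μ[a | ℱ (k - 1)]) ω * mdiff μ ℱ g k ω) ^ 2)) 1 μ ≤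
      ENNReal.ofReal K := by
  have hA' : MeasurableSet A := ℱ.le n A hA
  have hμA_ne_top : μ A ≠ ∞ := measure_ne_top μ A
  have ht0 : 0 < (μ A).toReal := ENNReal.toReal_pos hApos.ne' hμA_ne_top
  set t : ℝ := (μ A).toReal with ht_def
  set β : ℝ := 1 + 2 * (1 / p - 1) with hβ_def
  set M : ℝ := t ^ (-(1 / p)) with hM_def
  have hM0 : 0 < M := Real.rpow_pos_of_pos ht0 _
  set e : ℕ → Ω → ℝ := fun k => mdiff μ ℱ g k with he_def
  set f : ℕ → Ω → ℝ := fun k ω => (μ[a | ℱ (k - 1)]) ω * e k ω with hf_def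
  set b : ℕ → Ω → ℝ := fun k ω => if n + 2 ≤ k then (e k ω) ^ 2 else 0 with hb_def
  set G : Ω → ℝ≥0∞ := fun ω => ∑' k, ENNReal.ofReal (b k ω) with hG_def
  -- measurability
  have hemeas : ∀ k, Measurable (e k) := by
    intro k
    cases k with
    | zero =>
      have h0 : e 0 = (0 : Ω → ℝ) := by simp [he_def, mdiff]
      rw [h0]; exact measurable_zero
    | succ j =>
      simp only [he_def, mdiff, Nat.succ_ne_zero, if_false]
      exact ((stronglyMeasurable_condExp.mono (ℱ.le _)).measurable).sub
        ((stronglyMeasurable_condExp.mono (ℱ.le _)).measurable)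
  have hbmeas : ∀ k, Measurable (b k) := by
    intro k
    by_cases h : n + 2 ≤ k <;> simp only [hb_def, h, if_true, if_false]
    · exact (hemeas k).pow measurable_const
    · exact measurable_const
  have hGmeas : Measurable G := Measurable.ennreal_tsum fun k =>
    ENNReal.measurable_ofReal.comp (hbmeas k)
  have he2 : ∀ k, MemLp (e k) 2 μ := by
    intro k
    cases k with
    | zero =>
      have : e 0 = (0 : Ω → ℝ) := by simp [he_def, mdiff]
      rw [this]; exact MemLp.zero
    | succ j =>
      simp only [he_def, mdiff, Nat.succ_ne_zero, if_false]
      exact (memLp_two_condexp' (ℱ.le _) hg).sub (memLp_two_condexp' (ℱ.le _) hg)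
  -- a.e. bound on a
  have haint : Integrable a μ := ha.integrable le_top
  have hMght : (μ A ^ (-(1/p) : ℝ)) ≠ ∞ := by
    rw [Ne, ENNReal.rpow_eq_top_iff]
    rintro (⟨h0, _⟩ | ⟨htop, _⟩)
    · exact hApos.ne' h0
    · exact hμA_ne_top htop
  have hMt : M = (μ A ^ (-(1/p) : ℝ)).toReal := by
    rw [hM_def, ht_def, ENNReal.toReal_rpow]
  have haM : ∀ᵐ ω ∂μ, |a ω| ≤ M := by
    have hess : eLpNormEssSup a μ ≤ μ A ^ (-(1/p) : ℝ) := by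
      rw [← eLpNorm_exponent_top]; exact hsize
    filter_upwards [ae_le_eLpNormEssSup (f := a) (μ := μ)] with ω hω
    have h2 : (‖a ω‖₊ : ℝ≥0∞) ≤ μ A ^ (-(1/p) : ℝ) := hω.trans hess
    have h3 := ENNReal.toReal_mono hMght h2
    rw [hMt]
    simpa [Real.norm_eq_abs] using h3
  -- condexp bound
  have hEbound : ∀ j : ℕ, ∀ᵐ ω ∂μ, |(μ[a | ℱ j]) ω| ≤ M := by
    intro j
    have hub : μ[a | ℱ j] ≤ᵐ[μ] μ[(fun _ => M) | ℱ j] :=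
      condExp_mono haint (integrable_const M) (haM.mono fun ω h => (abs_le.mp h).2)
    have hlb : μ[(fun _ => -M) | ℱ j] ≤ᵐ[μ] μ[a | ℱ j] :=
      condExp_mono (integrable_const (-M)) haint (haM.mono fun ω h => (abs_le.mp h).1)
    have hcM : μ[(fun _ : Ω => M) | ℱ j] = fun _ => M := condExp_const (ℱ.le j) M
    have hcM' : μ[(fun _ : Ω => -M) | ℱ j] = fun _ => -M := condExp_const (ℱ.le j) (-M)
    filter_upwards [hub, hlb] with ω h1 h2
    rw [hcM] at h1
    rw [hcM'] at h2
    exact abs_le.mpr ⟨h2, h1⟩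
  -- support of condexp
  have hEsupp : ∀ j : ℕ, n ≤ j → μ[a | ℱ j] =ᵐ[μ] A.indicator (μ[a | ℱ j]) := by
    intro j hj
    have haind : A.indicator a = a :=
      Set.indicator_eq_self.2 fun ω hω => by
        by_contra hωA
        exact hω (hsupp ω hωA)
    have := condExp_indicator (m := ℱ j) haint (ℱ.mono hj A hA)
    rwa [haind] at this
  -- vanishing for small indices
  have hEzero : ∀ j : ℕ, j ≤ n → μ[a | ℱ j] =ᵐ[μ] 0 := by
    intro j hj
    have h1 : μ[a | ℱ j] =ᵐ[μ] μ[μ[a | ℱ n] | ℱ j] :=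
      (condExp_condExp_of_le (ℱ.mono hj) (ℱ.le n)).symm
    have h2 : μ[μ[a | ℱ n] | ℱ j] =ᵐ[μ] μ[(0 : Ω → ℝ) | ℱ j] := condExp_congr_ae hzero
    refine h1.trans (h2.trans ?_)
    rw [condExp_zero]
  -- per-k a.e. bound
  have hk : ∀ k : ℕ, ∀ᵐ ω ∂μ, (f k ω) ^ 2 ≤ M ^ 2 * b k ω ∧ (ω ∉ A → f k ω = 0) := by
    intro k
    by_cases hk2 : n + 2 ≤ k
    · have hj : n ≤ k - 1 := by omega
      filter_upwards [hEbound (k - 1), hEsupp (k - 1) hj] with ω h1 h2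
      constructor
      · have heq : (f k ω) ^ 2 = ((μ[a | ℱ (k-1)]) ω) ^ 2 * (e k ω) ^ 2 := by
          simp only [hf_def]; ring
        have hbk : b k ω = (e k ω) ^ 2 := by simp only [hb_def, if_pos hk2]
        rw [heq, hbk]
        exact mul_le_mul_of_nonneg_right
          (sq_le_sq' (abs_le.mp h1).1 (abs_le.mp h1).2) (sq_nonneg _)
      · intro hω
        have : (μ[a | ℱ (k-1)]) ω = 0 := by
          rw [h2]; exact Set.indicator_of_notMem hω _
        simp only [hf_def, this, zero_mul]
    · have hj : k - 1 ≤ n := by omega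
      filter_upwards [hEzero (k - 1) hj] with ω h1
      have hfk : f k ω = 0 := by
        simp only [hf_def, h1, Pi.zero_apply, zero_mul]
      refine ⟨?_, fun _ => hfk⟩
      rw [hfk]
      have hbk : b k ω = 0 := by simp only [hb_def, if_neg hk2]
      rw [hbk]
      simp
  have hae : ∀ᵐ ω ∂μ, ∀ k, (f k ω) ^ 2 ≤ M ^ 2 * b k ω ∧ (ω ∉ A → f k ω = 0) :=
    ae_all_iff.2 hk
  -- pointwise ENNReal bound
  have hpt : ∀ᵐ ω ∂μ, ENNReal.ofReal (Real.sqrt (∑' k, (f k ω) ^ 2)) ≤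
      ENNReal.ofReal M * A.indicator (fun _ => (1 : ℝ≥0∞)) ω * G ω ^ (1/2 : ℝ) := by
    filter_upwards [hae] with ω hω
    by_cases hωA : ω ∈ A
    · rw [Set.indicator_of_mem hωA, mul_one]
      by_cases hGtop : G ω = ∞
      · rw [hGtop, ENNReal.top_rpow_of_pos (by norm_num), ENNReal.mul_top
          (by simpa using hM0)]
        exact le_top
      · have hbnn : ∀ k, 0 ≤ b k ω := by
          intro k
          by_cases h : n + 2 ≤ k <;> simp [hb_def, h, sq_nonneg]
        have hsumb : Summable fun k => b k ω := by
          have := ENNReal.summable_toReal (f := fun k => ENNReal.ofReal (b k ω)) hGtop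
          simpa [ENNReal.toReal_ofReal, hbnn] using this
        have htsumb : ∑' k, b k ω = (G ω).toReal := by
          rw [hG_def, ENNReal.tsum_toReal_eq fun k => ENNReal.ofReal_ne_top]
          exact (tsum_congr fun k => (ENNReal.toReal_ofReal (hbnn k)).symm)
        have hle : ∑' k, (f k ω) ^ 2 ≤ M ^ 2 * ∑' k, b k ω := by
          rw [← tsum_mul_left]
          refine Summable.tsum_le_tsum (fun k => (hω k).1) ?_ (hsumb.mul_left _)
          exact Summable.of_nonneg_of_le (fun k => sq_nonneg _) (fun k => (hω k).1)
            (hsumb.mul_left _)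
        have hsqrt : Real.sqrt (∑' k, (f k ω) ^ 2) ≤ M * Real.sqrt ((G ω).toReal) := by
          calc Real.sqrt (∑' k, (f k ω) ^ 2) ≤ Real.sqrt (M ^ 2 * ∑' k, b k ω) :=
                Real.sqrt_le_sqrt hle
            _ = M * Real.sqrt (∑' k, b k ω) := by
                rw [Real.sqrt_mul (sq_nonneg M), Real.sqrt_sq hM0.le]
            _ = M * Real.sqrt ((G ω).toReal) := by rw [htsumb]
        calc ENNReal.ofReal (Real.sqrt (∑' k, (f k ω) ^ 2))
            ≤ ENNReal.ofReal (M * Real.sqrt ((G ω).toReal)) := ENNReal.ofReal_le_ofReal hsqrt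
          _ = ENNReal.ofReal M * ENNReal.ofReal (Real.sqrt ((G ω).toReal)) :=
              ENNReal.ofReal_mul hM0.le
          _ = ENNReal.ofReal M * G ω ^ (1/2 : ℝ) := by
              rw [Real.sqrt_eq_rpow, ← ENNReal.ofReal_rpow_of_nonneg ENNReal.toReal_nonneg
                (by norm_num : (0:ℝ) ≤ 1/2), ENNReal.ofReal_toReal hGtop]
    · have hzz : ∀ k, f k ω = 0 := fun k => (hω k).2 hωA
      have : ∑' k, (f k ω) ^ 2 = 0 := by
        simp [hzz]
      rw [this, Real.sqrt_zero, ENNReal.ofReal_zero]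
      exact zero_le
  -- bound on the set lintegral of G
  have hGbound : ∫⁻ ω in A, G ω ∂μ ≤ ENNReal.ofReal (K ^ 2 * t ^ β) := by
    have hswap : ∫⁻ ω in A, G ω ∂μ = ∑' k, ∫⁻ ω in A, ENNReal.ofReal (b k ω) ∂μ := by
      simp only [hG_def]
      exact lintegral_tsum fun k => (ENNReal.measurable_ofReal.comp (hbmeas k)).aemeasurable
    have hterm : ∀ k, ∫⁻ ω in A, ENNReal.ofReal (b k ω) ∂μ =
        ENNReal.ofReal (if n + 2 ≤ k then ∫ ω in A, (e k ω) ^ 2 ∂μ else 0) := by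
      intro k
      by_cases h : n + 2 ≤ k
      · simp only [hb_def, if_pos h]
        rw [← ofReal_integral_eq_lintegral_ofReal ((he2 k).integrable_sq.integrableOn)
          (Eventually.of_forall fun ω => sq_nonneg _)]
      · simp [hb_def, if_neg h]
    rw [hswap]
    calc ∑' k, ∫⁻ ω in A, ENNReal.ofReal (b k ω) ∂μ
        = ∑' k, ENNReal.ofReal (if n + 2 ≤ k then ∫ ω in A, (e k ω) ^ 2 ∂μ else 0) :=
          tsum_congr hterm
      _ ≤ ENNReal.ofReal (∫ ω in A, (g ω - (μ[g|ℱ n]) ω) ^ 2 ∂μ) := by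
          refine Summable.tsum_le_of_sum_le ENNReal.summable fun s => ?_
          rw [← ENNReal.ofReal_sum_of_nonneg]
          · refine ENNReal.ofReal_le_ofReal ?_
            have := sum_le_lambda ℱ hg hA s
            simpa only [he_def] using this
          · intro k _
            by_cases h : n + 2 ≤ k <;> simp only [h, if_true, if_false, le_refl]
            exact integral_nonneg fun ω => sq_nonneg _
      _ ≤ ENNReal.ofReal (K ^ 2 * t ^ β) := ENNReal.ofReal_le_ofReal (hΛ2 n A hA)
  -- Cauchy-Schwarz
  have hCS : ∫⁻ ω in A, G ω ^ (1/2 : ℝ) ∂μ ≤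
      (∫⁻ ω in A, G ω ∂μ) ^ (1/2 : ℝ) * (μ A) ^ (1/2 : ℝ) := by
    have hconj : Real.HolderConjugate 2 2 := Real.HolderConjugate.two_two
    have h := ENNReal.lintegral_mul_le_Lp_mul_Lq (μ.restrict A) hconj
      (f := fun ω => G ω ^ (1/2 : ℝ)) (g := fun _ => (1 : ℝ≥0∞))
      ((hGmeas.pow measurable_const).aemeasurable) aemeasurable_const
    simp only [Pi.mul_apply, mul_one, ENNReal.one_rpow] at h
    calc ∫⁻ ω in A, G ω ^ (1/2 : ℝ) ∂μ
        ≤ (∫⁻ ω in A, (G ω ^ (1/2 : ℝ)) ^ (2 : ℝ) ∂μ) ^ (1/(2:ℝ)) *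
            (∫⁻ ω in A, (1:ℝ≥0∞) ∂μ) ^ (1/(2:ℝ)) := h
      _ = (∫⁻ ω in A, G ω ∂μ) ^ (1/2 : ℝ) * (μ A) ^ (1/2 : ℝ) := by
          rw [setLIntegral_one]
          congr 1
          congr 1
          refine lintegral_congr fun ω => ?_
          rw [← ENNReal.rpow_mul]
          norm_num
  -- reduce goal to a lintegral bound
  rw [eLpNorm_one_eq_lintegral_enorm]
  have hnn : ∀ ω : Ω, (‖Real.sqrt (∑' k : ℕ, ((μ[a | ℱ (k - 1)]) ω * mdiff μ ℱ g k ω) ^ 2)‖₊ : ℝ≥0∞)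
      = ENNReal.ofReal (Real.sqrt (∑' k, (f k ω) ^ 2)) := by
    intro ω
    rw [← Real.enorm_eq_ofReal (Real.sqrt_nonneg _)]
    rfl
  calc ∫⁻ ω, (‖Real.sqrt (∑' k : ℕ, ((μ[a | ℱ (k - 1)]) ω * mdiff μ ℱ g k ω) ^ 2)‖₊ : ℝ≥0∞) ∂μ
      = ∫⁻ ω, ENNReal.ofReal (Real.sqrt (∑' k, (f k ω) ^ 2)) ∂μ := lintegral_congr hnn
    _ ≤ ∫⁻ ω, ENNReal.ofReal M * A.indicator (fun _ => (1 : ℝ≥0∞)) ω * G ω ^ (1/2 : ℝ) ∂μ :=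
        lintegral_mono_ae hpt
    _ = ENNReal.ofReal M * ∫⁻ ω in A, G ω ^ (1/2 : ℝ) ∂μ := by
        have hind : (fun ω => ENNReal.ofReal M * A.indicator (fun _ => (1:ℝ≥0∞)) ω * G ω ^ (1/2:ℝ)) =
            fun ω => ENNReal.ofReal M * A.indicator (fun ω' => G ω' ^ (1/2:ℝ)) ω := by
          funext ω
          by_cases hω : ω ∈ A <;>
            simp [Set.indicator_of_mem, Set.indicator_of_notMem, hω, mul_assoc]
        rw [hind, lintegral_const_mul _ ((hGmeas.pow measurable_const).indicator hA'),
          lintegral_indicator hA']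
    _ ≤ ENNReal.ofReal M * ((∫⁻ ω in A, G ω ∂μ) ^ (1/2 : ℝ) * (μ A) ^ (1/2 : ℝ)) :=
        mul_le_mul_right hCS _
    _ ≤ ENNReal.ofReal M * ((ENNReal.ofReal (K ^ 2 * t ^ β)) ^ (1/2 : ℝ) * (μ A) ^ (1/2 : ℝ)) := by
        gcongr
    _ = ENNReal.ofReal K := by
        have hKt : (0:ℝ) ≤ K ^ 2 * t ^ β := mul_nonneg (sq_nonneg K) (Real.rpow_pos_of_pos ht0 β).le
        have hμAt : μ A = ENNReal.ofReal t := by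
          rw [ht_def, ENNReal.ofReal_toReal hμA_ne_top]
        rw [hμAt, ENNReal.ofReal_rpow_of_nonneg hKt (by norm_num : (0:ℝ) ≤ 1/2),
          ENNReal.ofReal_rpow_of_nonneg ht0.le (by norm_num : (0:ℝ) ≤ 1/2),
          ← ENNReal.ofReal_mul (Real.rpow_nonneg hKt _),
          ← ENNReal.ofReal_mul hM0.le]
        congr 1
        have h1 : (K ^ 2 * t ^ β) ^ (1/2 : ℝ) = K * t ^ (β * (1/2)) := by
          rw [Real.mul_rpow (sq_nonneg K) (Real.rpow_pos_of_pos ht0 β).le,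
            ← Real.rpow_natCast K 2, ← Real.rpow_mul hK, ← Real.rpow_mul ht0.le]
          norm_num
        rw [h1]
        have h2 : t ^ (-(1/p)) * t ^ (β * (1/2)) * t ^ (1/2 : ℝ) = 1 := by
          rw [← Real.rpow_add ht0, ← Real.rpow_add ht0]
          have hexp : -(1/p) + β * (1/2) + 1/2 = 0 := by rw [hβ_def]; ring
          rw [hexp, Real.rpow_zero]
        calc M * (K * t ^ (β * (1/2)) * t ^ (1/2 : ℝ))
            = K * (t ^ (-(1/p)) * t ^ (β * (1/2)) * t ^ (1/2 : ℝ)) := by rw [hM_def]; ring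
          _ = K := by rw [h2, mul_one]
end

section
/- Let (Ω, d, μ) be a space of homogeneous type with doubling constant 2^{C_μ} (i.e., μ(B(x,2r)) ≤ 2^{C_μ} μ(B(x,r)) for all x, r > 0). Fix a point O ∈ Ω and D ≥ 1, 0 < p < 1. If a ball B = B(x_0, r) satisfies ∫_B [1 + (1 + μ(B(O, d(x,O))))^{1−p}]^{−1} dμ(x) = 1, then ∫_{DB} [1 + (1 + μ(B(O, d(x,O))))^{1−p}]^{−1} dμ(x) ≤ C where C depends only on D, p, the quasi-metric constant A_0 and C_μ, and DB = B(x_0, Dr). -/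
open MeasureTheory Set
open scoped ENNReal NNReal

private lemma rpow_le_eps {a ε q : ℝ} (ha : 0 ≤ a) (hq0 : 0 < q) (hq1 : q < 1) (hε : 0 < ε) :
    a ^ q ≤ ε * a + ε ^ (-(q / (1 - q))) := by
  have h1q : (0:ℝ) < 1 - q := by linarith
  set T : ℝ := ε ^ (-(1 - q)⁻¹) with hT
  have hT0 : 0 < T := Real.rpow_pos_of_pos hε _
  rcases le_or_gt a T with h | h
  · have h1 : a ^ q ≤ T ^ q := Real.rpow_le_rpow ha h hq0.le
    have h2 : T ^ q = ε ^ (-(q / (1 - q))) := by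
      rw [hT, ← Real.rpow_mul hε.le]
      congr 1
      field_simp
    rw [h2] at h1
    have h3 : 0 ≤ ε * a := mul_nonneg hε.le ha
    linarith
  · have ha0 : 0 < a := hT0.trans h
    have h1 : ε⁻¹ ≤ a ^ (1 - q) := by
      have h2 := Real.rpow_le_rpow hT0.le h.le h1q.le
      rwa [hT, ← Real.rpow_mul hε.le, neg_mul, inv_mul_cancel₀ h1q.ne', Real.rpow_neg_one] at h2
    have h2 : (1:ℝ) ≤ ε * a ^ (1 - q) := by
      calc (1:ℝ) = ε * ε⁻¹ := (mul_inv_cancel₀ hε.ne').symm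
        _ ≤ ε * a ^ (1 - q) := mul_le_mul_of_nonneg_left h1 hε.le
    have h3 : a ^ q ≤ ε * a := by
      calc a ^ q = a ^ q * 1 := (mul_one _).symm
        _ ≤ a ^ q * (ε * a ^ (1 - q)) :=
            mul_le_mul_of_nonneg_left h2 (Real.rpow_nonneg ha0.le q)
        _ = ε * (a ^ q * a ^ (1 - q)) := by ring
        _ = ε * a := by rw [← Real.rpow_add ha0]; norm_num
    have h4 : 0 ≤ ε ^ (-(q / (1 - q))) := (Real.rpow_pos_of_pos hε _).le
    linarith

set_option maxHeartbeats 1000000 in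
/-- On a space of homogeneous type with quasi-metric constant `A₀` and doubling constant
`2^{C_μ}`, fix `O ∈ Ω`, `D ≥ 1` and `0 < p < 1`. If a ball `B = B(x₀,r)` satisfies
`∫_B [1 + (1 + μ(B(O,d(x,O))))^{1−p}]⁻¹ dμ(x) = 1`, then the corresponding integral over
the dilated ball `DB = B(x₀,Dr)` is bounded by a constant depending only on
`D, p, A₀, C_μ`. -/

theorem dilated_ball_Psi_p_integral_bound (A0 Cmu D p : ℝ)
    (hA0 : 1 ≤ A0) (hCmu : 0 ≤ Cmu) (hD : 1 ≤ D) (hp0 : 0 < p) (hp1 : p < 1) :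
    ∃ C : ℝ, 0 < C ∧
      ∀ (Ω : Type) [m0 : MeasurableSpace Ω] (μ : Measure Ω) (d : Ω → Ω → ℝ),
        (∀ x y, 0 ≤ d x y) → (∀ x, d x x = 0) → (∀ x y, d x y = d y x) →
        (∀ x y z, d x y ≤ A0 * (d x z + d z y)) →
        (∀ x r, MeasurableSet {y | d y x < r}) →
        (∀ x r, 0 < r → 0 < μ {y | d y x < r}) →
        (∀ x r, 0 < r → μ {y | d y x < r} < ⊤) →
        (∀ x r, 0 < r →
          μ {y | d y x < 2 * r} ≤ ENNReal.ofReal (2 ^ Cmu) * μ {y | d y x < r}) →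
        ∀ (O x₀ : Ω) (r : ℝ), 0 < r →
        Measurable (fun x => (μ {y | d y O < d x O}).toReal) →
        (∫ x in {y | d y x₀ < r},
            (1 + (1 + (μ {y | d y O < d x O}).toReal) ^ (1 - p))⁻¹ ∂μ) = 1 →
        ∫ x in {y | d y x₀ < D * r},
            (1 + (1 + (μ {y | d y O < d x O}).toReal) ^ (1 - p))⁻¹ ∂μ ≤ C := by
  have hq0 : 0 < 1 - p := by linarith
  have hq1 : 1 - p < 1 := by linarith
  have hA0' : 0 < A0 := lt_of_lt_of_le one_pos hA0
  have hD0 : 0 < D := lt_of_lt_of_le one_pos hD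
  have hA3 : (1:ℝ) ≤ A0 ^ 3 := one_le_pow₀ hA0
  have hA2 : (1:ℝ) ≤ A0 ^ 2 := one_le_pow₀ hA0
  obtain ⟨N, hN⟩ := pow_unbounded_of_one_lt (5 * A0 ^ 3 * D + 4 * A0 ^ 2) one_lt_two
  have h2C : (1:ℝ) ≤ 2 ^ Cmu := Real.one_le_rpow one_le_two hCmu
  set L : ℝ := (2 ^ Cmu) ^ N with hLdef
  have hL1 : 1 ≤ L := one_le_pow₀ h2C
  have hL0 : 0 < L := lt_of_lt_of_le one_pos hL1
  set ε : ℝ := (2 * L)⁻¹ with hεdef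
  have hε0 : 0 < ε := by positivity
  set Ce : ℝ := ε ^ (-((1 - p) / (1 - (1 - p)))) with hCedef
  have hCe0 : 0 < Ce := Real.rpow_pos_of_pos hε0 _
  set C3 : ℝ := 2 * (1 + ε + Ce) with hC3def
  have hC30 : 0 < C3 := by positivity
  refine ⟨L * C3 + L ^ 2, by positivity, ?_⟩
  intro Ω m0 μ d hd0 hdxx hsymm htri hmb hpos hfin hdbl O x₀ r hr hm hB
  set f : Ω → ℝ := fun x => (1 + (1 + (μ {y | d y O < d x O}).toReal) ^ (1 - p))⁻¹ with hfdef
  have hf0 : ∀ x, 0 < f x := by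
    intro x; simp only [hfdef]; positivity
  have hf1 : ∀ x, f x ≤ 1 := by
    intro x
    simp only [hfdef]
    have h := Real.rpow_nonneg
      (by positivity : (0:ℝ) ≤ 1 + (μ {y | d y O < d x O}).toReal) (1 - p)
    rw [inv_le_one_iff₀]
    right; linarith
  have hfm : Measurable f := by
    simp only [hfdef]
    fun_prop
  -- iterated doubling
  have hiter : ∀ (x : Ω) (s : ℝ), 0 < s → ∀ n : ℕ,
      μ {y | d y x < 2 ^ n * s} ≤ (ENNReal.ofReal (2 ^ Cmu)) ^ n * μ {y | d y x < s} := by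
    intro x s hs n
    induction n with
    | zero => simp
    | succ n ih =>
        have h2 : ((2:ℝ) ^ (n + 1)) * s = 2 * ((2:ℝ) ^ n * s) := by ring
        rw [h2, pow_succ]
        calc μ {y | d y x < 2 * (2 ^ n * s)}
            ≤ ENNReal.ofReal (2 ^ Cmu) * μ {y | d y x < 2 ^ n * s} :=
              hdbl x (2 ^ n * s) (by positivity)
          _ ≤ ENNReal.ofReal (2 ^ Cmu) * ((ENNReal.ofReal (2 ^ Cmu)) ^ n * μ {y | d y x < s}) :=
              mul_le_mul_right ih _
          _ = (ENNReal.ofReal (2 ^ Cmu)) ^ n * ENNReal.ofReal (2 ^ Cmu) * μ {y | d y x < s} := by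
              ring
  have hscale : ∀ (x : Ω) (s t : ℝ), 0 < s → t ≤ 2 ^ N * s →
      μ {y | d y x < t} ≤ ENNReal.ofReal L * μ {y | d y x < s} := by
    intro x s t hs hts
    have h1 : μ {y | d y x < t} ≤ μ {y | d y x < 2 ^ N * s} :=
      measure_mono fun y hy => lt_of_lt_of_le hy hts
    have h2 := hiter x s hs N
    rw [← ENNReal.ofReal_pow (by positivity)] at h2
    exact h1.trans h2
  set V : ℝ := (μ {y | d y x₀ < r}).toReal with hVdef
  have hV0 : 0 ≤ V := ENNReal.toReal_nonneg
  have hBfin : μ {y | d y x₀ < r} ≠ ⊤ := (hfin x₀ r hr).ne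
  have hDN : D * r ≤ 2 ^ N * r := by
    have h1 : D ≤ 5 * A0 ^ 3 * D := by
      have := mul_le_mul_of_nonneg_right (by linarith : (1:ℝ) ≤ 5 * A0 ^ 3) hD0.le
      linarith [this]
    have h2 : (0:ℝ) ≤ 4 * A0 ^ 2 := by positivity
    exact mul_le_mul_of_nonneg_right (by linarith) hr.le
  have hVDB : (μ {y | d y x₀ < D * r}).toReal ≤ L * V := by
    have h := ENNReal.toReal_mono (ENNReal.mul_ne_top ENNReal.ofReal_ne_top hBfin)
      (hscale x₀ r (D * r) hr hDN)
    rwa [ENNReal.toReal_mul, ENNReal.toReal_ofReal hL0.le] at h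
  -- integrability
  have hint : ∀ ρ : ℝ, 0 < ρ → IntegrableOn f {y | d y x₀ < ρ} μ := by
    intro ρ hρ
    refine Integrable.mono' (g := fun _ => (1:ℝ)) (integrableOn_const (hfin x₀ ρ hρ).ne)
      hfm.aestronglyMeasurable ?_
    exact ae_of_all _ fun x => by
      rw [Real.norm_eq_abs, abs_of_nonneg (hf0 x).le]; exact hf1 x
  have hupper : ∀ (ρ F : ℝ), 0 < ρ → (∀ x ∈ {y | d y x₀ < ρ}, f x ≤ F) →
      ∫ x in {y | d y x₀ < ρ}, f x ∂μ ≤ F * (μ {y | d y x₀ < ρ}).toReal := by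
    intro ρ F hρ hF
    have h1 : ∫ x in {y | d y x₀ < ρ}, f x ∂μ ≤ ∫ _x in {y | d y x₀ < ρ}, F ∂μ :=
      setIntegral_mono_on (hint ρ hρ) (integrableOn_const (hfin x₀ ρ hρ).ne)
        (hmb x₀ ρ) hF
    rwa [setIntegral_const, smul_eq_mul, mul_comm] at h1
  have hVden : ∀ den : ℝ, 0 < den → (∀ x ∈ {y | d y x₀ < r}, den⁻¹ ≤ f x) → V ≤ den := by
    intro den hden h
    have h1 : ∫ _x in {y | d y x₀ < r}, den⁻¹ ∂μ ≤ ∫ x in {y | d y x₀ < r}, f x ∂μ :=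
      setIntegral_mono_on (integrableOn_const (hfin x₀ r hr).ne) (hint r hr)
        (hmb x₀ r) h
    rw [setIntegral_const, smul_eq_mul, hB] at h1
    calc V = den * (den⁻¹ * V) := by field_simp
      _ ≤ den * 1 := mul_le_mul_of_nonneg_left (by rw [mul_comm]; exact h1) hden.le
      _ = den := mul_one _
  rcases le_or_gt (d x₀ O) (2 * A0 * D * r) with hc | hc
  · -- Case 1: center near the origin
    have hmB : ∀ x ∈ {y | d y x₀ < r}, (μ {y | d y O < d x O}).toReal ≤ L * V := by
      intro x hx
      have hx' : d x x₀ < r := hx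
      have hxO : d x O ≤ A0 * (r + 2 * A0 * D * r) := by
        have h1 := htri x O x₀
        have h2 : A0 * (d x x₀ + d x₀ O) ≤ A0 * (r + 2 * A0 * D * r) :=
          mul_le_mul_of_nonneg_left (by linarith : d x x₀ + d x₀ O ≤ r + 2 * A0 * D * r) hA0'.le
        linarith
      have hsub2 : {y | d y O < d x O} ⊆ {y | d y x₀ < 2 ^ N * r} := by
        intro y hy
        simp only [mem_setOf_eq] at hy ⊢
        have h1 := htri y x₀ O
        have h2 : d O x₀ = d x₀ O := hsymm O x₀
        have key : A0 * (A0 * (r + 2 * A0 * D * r) + 2 * A0 * D * r)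
            ≤ (5 * A0 ^ 3 * D + 4 * A0 ^ 2) * r := by
          have q1 : (0:ℝ) ≤ A0 ^ 2 * D * r * (3 * A0 - 2) :=
            mul_nonneg (by positivity) (by linarith)
          have q2 : (0:ℝ) ≤ A0 ^ 2 * r := by positivity
          linarith [q1, q2]
        have s1 : A0 * (d y O + d x₀ O) < A0 * (d x O + d x₀ O) :=
          mul_lt_mul_of_pos_left (by linarith) hA0'
        have s2 : A0 * (d x O + d x₀ O) ≤ A0 * (A0 * (r + 2 * A0 * D * r) + 2 * A0 * D * r) :=
          mul_le_mul_of_nonneg_left (add_le_add hxO hc) hA0'.le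
        have s4 : (5 * A0 ^ 3 * D + 4 * A0 ^ 2) * r < 2 ^ N * r :=
          mul_lt_mul_of_pos_right hN hr
        rw [h2] at h1
        linarith
      have hsub : μ {y | d y O < d x O} ≤ ENNReal.ofReal L * μ {y | d y x₀ < r} :=
        (measure_mono hsub2).trans (hscale x₀ r (2 ^ N * r) hr le_rfl)
      have h := ENNReal.toReal_mono (ENNReal.mul_ne_top ENNReal.ofReal_ne_top hBfin) hsub
      rwa [ENNReal.toReal_mul, ENNReal.toReal_ofReal hL0.le] at h
    have hden : (0:ℝ) < 1 + (1 + L * V) ^ (1 - p) := by positivity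
    have hflow : ∀ x ∈ {y | d y x₀ < r}, (1 + (1 + L * V) ^ (1 - p))⁻¹ ≤ f x := by
      intro x hx
      simp only [hfdef]
      have h1 : (1 + (μ {y | d y O < d x O}).toReal) ^ (1 - p) ≤ (1 + L * V) ^ (1 - p) :=
        Real.rpow_le_rpow (by positivity) (by linarith [hmB x hx]) hq0.le
      exact inv_anti₀ (by positivity) (by linarith)
    have hVle : V ≤ 1 + (1 + L * V) ^ (1 - p) := hVden _ hden hflow
    have hVC3 : V ≤ C3 := by
      have heps := rpow_le_eps (a := 1 + L * V) (ε := ε) (q := 1 - p)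
        (by positivity) hq0 hq1 hε0
      rw [← hCedef] at heps
      have hεL : ε * (1 + L * V) = ε + V / 2 := by
        rw [hεdef]; field_simp
      have hc3 := hC3def
      linarith
    have hup := hupper (D * r) 1 (by positivity) (fun x _ => hf1 x)
    have hfinal : ∫ x in {y | d y x₀ < D * r}, f x ∂μ ≤ L * C3 := by
      calc ∫ x in {y | d y x₀ < D * r}, f x ∂μ
          ≤ 1 * (μ {y | d y x₀ < D * r}).toReal := hup
        _ = (μ {y | d y x₀ < D * r}).toReal := one_mul _
        _ ≤ L * V := hVDB
        _ ≤ L * C3 := mul_le_mul_of_nonneg_left hVC3 hL0.le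
    linarith [hfinal, sq_nonneg L]
  · -- Case 2: center far from the origin
    have hd00 : 0 < d x₀ O := lt_of_le_of_lt (by positivity) hc
    have hr1 : 0 < d x₀ O / (2 * A0) := by positivity
    set m1 : ℝ := (μ {y | d y O < d x₀ O / (2 * A0)}).toReal with hm1def
    set m2 : ℝ := (μ {y | d y O < 2 * A0 * d x₀ O}).toReal with hm2def
    have hm2fin : μ {y | d y O < 2 * A0 * d x₀ O} ≠ ⊤ := (hfin O _ (by positivity)).ne
    have hm10 : 0 ≤ m1 := ENNReal.toReal_nonneg
    have hm20 : 0 ≤ m2 := ENNReal.toReal_nonneg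
    have hm21 : m2 ≤ L * m1 := by
      have h4N : 4 * A0 ^ 2 ≤ 2 ^ N := by
        have h50 : (0:ℝ) ≤ 5 * A0 ^ 3 * D := by positivity
        linarith
      have hrad : 2 * A0 * d x₀ O ≤ 2 ^ N * (d x₀ O / (2 * A0)) := by
        rw [div_eq_mul_inv]
        have h1 : 2 * A0 ≤ 2 ^ N * (2 * A0)⁻¹ := by
          rw [le_mul_inv_iff₀ (by positivity : (0:ℝ) < 2 * A0)]
          have h4N' : 2 * A0 * (2 * A0) = 4 * A0 ^ 2 := by ring
          linarith [h4N']
        calc 2 * A0 * d x₀ O ≤ (2 ^ N * (2 * A0)⁻¹) * d x₀ O :=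
            mul_le_mul_of_nonneg_right h1 hd00.le
          _ = 2 ^ N * (d x₀ O * (2 * A0)⁻¹) := by ring
      have h := ENNReal.toReal_mono
        (ENNReal.mul_ne_top ENNReal.ofReal_ne_top (hfin O _ hr1).ne)
        (hscale O (d x₀ O / (2 * A0)) (2 * A0 * d x₀ O) hr1 hrad)
      rwa [ENNReal.toReal_mul, ENNReal.toReal_ofReal hL0.le] at h
    have hden1 : (0:ℝ) < 1 + (1 + m1) ^ (1 - p) := by positivity
    have hden2 : (0:ℝ) < 1 + (1 + m2) ^ (1 - p) := by positivity
    have hF1 : ∀ x ∈ {y | d y x₀ < D * r}, f x ≤ (1 + (1 + m1) ^ (1 - p))⁻¹ := by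
      intro x hx
      have hx' : d x x₀ < D * r := hx
      have hdx : d x₀ O / (2 * A0) ≤ d x O := by
        have h1 := htri x₀ O x
        have h2 : d x₀ x = d x x₀ := hsymm x₀ x
        rw [h2] at h1
        rw [div_le_iff₀ (by positivity : (0:ℝ) < 2 * A0)]
        have h3 : A0 * d x x₀ < A0 * (D * r) := mul_lt_mul_of_pos_left hx' hA0'
        have h4 : A0 * (d x x₀ + d x O) = A0 * d x x₀ + A0 * d x O := by ring
        nlinarith [hd0 x O]
      have hdxpos : 0 < d x O := lt_of_lt_of_le hr1 hdx
      have hmx : m1 ≤ (μ {y | d y O < d x O}).toReal := by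
        apply ENNReal.toReal_mono (hfin O _ hdxpos).ne
        exact measure_mono fun y hy => lt_of_lt_of_le hy hdx
      simp only [hfdef]
      apply inv_anti₀ hden1
      have h1 : (1 + m1) ^ (1 - p) ≤ (1 + (μ {y | d y O < d x O}).toReal) ^ (1 - p) :=
        Real.rpow_le_rpow (by positivity) (by linarith) hq0.le
      linarith
    have hF2 : ∀ x ∈ {y | d y x₀ < r}, (1 + (1 + m2) ^ (1 - p))⁻¹ ≤ f x := by
      intro x hx
      have hx' : d x x₀ < r := hx
      have hdx : d x O ≤ 2 * A0 * d x₀ O := by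
        have h1 := htri x O x₀
        have hrR : r ≤ 2 * A0 * D * r := by
          have h5 : (1:ℝ) ≤ 2 * A0 * D := by nlinarith
          nlinarith
        have hxx : d x x₀ < d x₀ O := by linarith
        have h2 : A0 * (d x x₀ + d x₀ O) ≤ A0 * (d x₀ O + d x₀ O) :=
          mul_le_mul_of_nonneg_left (by linarith) hA0'.le
        nlinarith
      have hmx : (μ {y | d y O < d x O}).toReal ≤ m2 := by
        apply ENNReal.toReal_mono hm2fin
        exact measure_mono fun y hy => lt_of_lt_of_le hy hdx
      simp only [hfdef]
      apply inv_anti₀ (by positivity)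
      have h1 : (1 + (μ {y | d y O < d x O}).toReal) ^ (1 - p) ≤ (1 + m2) ^ (1 - p) :=
        Real.rpow_le_rpow (by positivity) (by linarith) hq0.le
      linarith
    have hVle : V ≤ 1 + (1 + m2) ^ (1 - p) := hVden _ hden2 hF2
    have hkey : 1 + (1 + m2) ^ (1 - p) ≤ L * (1 + (1 + m1) ^ (1 - p)) := by
      have h1 : 1 + m2 ≤ L * (1 + m1) := by
        have h0 : L * (1 + m1) = L + L * m1 := by ring
        linarith
      have h2 : (1 + m2) ^ (1 - p) ≤ (L * (1 + m1)) ^ (1 - p) :=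
        Real.rpow_le_rpow (by positivity) h1 hq0.le
      have h3 : (L * (1 + m1)) ^ (1 - p) = L ^ (1 - p) * (1 + m1) ^ (1 - p) :=
        Real.mul_rpow hL0.le (by positivity)
      have h4 : L ^ (1 - p) ≤ L := by
        calc L ^ (1 - p) ≤ L ^ (1:ℝ) := Real.rpow_le_rpow_of_exponent_le hL1 (by linarith)
          _ = L := Real.rpow_one L
      have h5 : (1 + m2) ^ (1 - p) ≤ L * (1 + m1) ^ (1 - p) := by
        calc (1 + m2) ^ (1 - p) ≤ (L * (1 + m1)) ^ (1 - p) := h2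
          _ = L ^ (1 - p) * (1 + m1) ^ (1 - p) := h3
          _ ≤ L * (1 + m1) ^ (1 - p) :=
              mul_le_mul_of_nonneg_right h4 (Real.rpow_nonneg (by positivity) _)
      have h6 : L * (1 + (1 + m1) ^ (1 - p)) = L + L * (1 + m1) ^ (1 - p) := by ring
      linarith [h5, h6]
    have hF1pos : (0:ℝ) < (1 + (1 + m1) ^ (1 - p))⁻¹ := by positivity
    have hup := hupper (D * r) ((1 + (1 + m1) ^ (1 - p))⁻¹) (by positivity) hF1
    have hfinal : ∫ x in {y | d y x₀ < D * r}, f x ∂μ ≤ L ^ 2 := by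
      calc ∫ x in {y | d y x₀ < D * r}, f x ∂μ
          ≤ (1 + (1 + m1) ^ (1 - p))⁻¹ * (μ {y | d y x₀ < D * r}).toReal := hup
        _ ≤ (1 + (1 + m1) ^ (1 - p))⁻¹ * (L * V) :=
            mul_le_mul_of_nonneg_left hVDB hF1pos.le
        _ ≤ (1 + (1 + m1) ^ (1 - p))⁻¹ * (L * (1 + (1 + m2) ^ (1 - p))) := by
            apply mul_le_mul_of_nonneg_left _ hF1pos.le
            exact mul_le_mul_of_nonneg_left hVle hL0.le
        _ ≤ (1 + (1 + m1) ^ (1 - p))⁻¹ * (L * (L * (1 + (1 + m1) ^ (1 - p)))) := by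
            apply mul_le_mul_of_nonneg_left _ hF1pos.le
            exact mul_le_mul_of_nonneg_left hkey hL0.le
        _ = L ^ 2 * ((1 + (1 + m1) ^ (1 - p))⁻¹ * (1 + (1 + m1) ^ (1 - p))) := by ring
        _ = L ^ 2 := by rw [inv_mul_cancel₀ hden1.ne']; ring
    linarith [hfinal, mul_pos hL0 hC30]
end
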